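/- Let D be a reflexive Fréchet space in a rigged Hilbert space D ⊂ H ⊂ D*, let ω be a distribution frame with frame operator S_ω ∈ L(D,D*), and let R_ω ∈ L(D) satisfy S_ω R_ω f = R_ω× S_ω f = f for all f ∈ D. Define θ_x := R_ω× ω_x. Then ⟨f,g⟩ = ∫_X ⟨f,θ_x⟩⟨ω_x,g⟩dμ for all f,g ∈ D, θ is a Bessel distribution map, and its frame operator satisfies S_θ = I_{D,D*} R_ω; moreover B⁻¹‖f‖² ≤ ⟨S_θ f, f⟩ ≤ A⁻¹‖f‖² for all f ∈ D, so θ is a distribution frame (the canonical dual frame). -/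

import Mathlib

open MeasureTheory ComplexConjugate

private lemma aux_lower {B t a : ℝ} (hB : 0 < B) (ht : 0 ≤ t)
    (h5 : a ^ 2 * a ^ 2 ≤ t * (B * a ^ 2)) (ha : 0 ≤ a) : B⁻¹ * a ^ 2 ≤ t := by
  rcases eq_or_lt_of_le ha with h | h
  · simp [← h, ht]
  · have ha2 : 0 < a ^ 2 := pow_pos h 2
    rw [inv_mul_le_iff₀ hB]
    nlinarith [h5, ha2]

private lemma aux_upper {A B t a b : ℝ} (hA : 0 < A) (hB : 0 < B) (ht : 0 ≤ t)
    (h1 : A * b ^ 2 ≤ t) (h2 : t ≤ b * a) (hhi : t ≤ B * b ^ 2)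
    (ha : 0 ≤ a) (hb : 0 ≤ b) : t ≤ A⁻¹ * a ^ 2 := by
  rcases eq_or_lt_of_le hb with h | h
  · have : t = 0 := le_antisymm (by nlinarith) ht
    rw [this]
    exact mul_nonneg (inv_nonneg.mpr hA.le) (sq_nonneg _)
  · have hAb : A * b ≤ a := by
      have h6 : A * b * b ≤ a * b := by nlinarith
      exact le_of_mul_le_mul_right h6 h
    rw [le_inv_mul_iff₀ hA]
    nlinarith


/-- Let `ω` be a distribution frame with frame operator `S_ω ∈ L(D,D*)` and
let `R_ω ∈ L(D)` satisfy `S_ω R_ω = R_ω× S_ω = I_{D,D*}`. Then `θ_x := R_ω× ω_x`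
(i.e. `θ_x = ω_x ∘ R_ω`) satisfies the reconstruction formula
`⟨f,g⟩ = ∫ ⟨f,θ_x⟩⟨ω_x,g⟩dμ`, is a Bessel distribution map, its frame operator is
`S_θ = I_{D,D*} R_ω`, and `B⁻¹‖f‖² ≤ ⟨S_θ f,f⟩ = ∫|⟨f,θ_x⟩|²dμ ≤ A⁻¹‖f‖²`, so `θ` is a
distribution frame (the canonical dual frame). -/
theorem stmt19
    {D : Type*} [AddCommGroup D] [Module ℂ D] [UniformSpace D] [IsUniformAddGroup D]
    [ContinuousSMul ℂ D] [CompleteSpace D] [TopologicalSpace.MetrizableSpace D]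
    [Module ℝ D] [IsScalarTower ℝ ℂ D] [LocallyConvexSpace ℝ D]
    {H : Type*} [NormedAddCommGroup H] [InnerProductSpace ℂ H] [CompleteSpace H]
    (j : D →L[ℂ] H) (hj : Function.Injective j) (hjd : DenseRange j)
    (hrefl : ∀ φ : (D →SL[starRingEnd ℂ] ℂ) →L[ℂ] ℂ, ∃ f : D,
      ∀ Φ : D →SL[starRingEnd ℂ] ℂ, φ Φ = Φ f)
    {X : Type*} [MeasurableSpace X] (μ : Measure X) [SigmaFinite μ]
    (ω : X → (D →SL[starRingEnd ℂ] ℂ))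
    (hmeas : ∀ f : D, Measurable fun x => (ω x) f)
    (hL2 : ∀ f : D, MemLp (fun x => (ω x) f) 2 μ)
    (A B : ℝ) (hA : 0 < A) (hAB : A ≤ B)
    (hframe : ∀ f : D, A * ‖j f‖ ^ 2 ≤ ∫ x, ‖(ω x) f‖ ^ 2 ∂μ ∧
        ∫ x, ‖(ω x) f‖ ^ 2 ∂μ ≤ B * ‖j f‖ ^ 2)
    (S : D →L[ℂ] (D →SL[starRingEnd ℂ] ℂ))
    (hS : ∀ f g : D, (S f) g = ∫ x, conj ((ω x) f) * (ω x) g ∂μ)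
    (R : D →L[ℂ] D)
    (hR1 : ∀ f g : D, (S (R f)) g = (inner ℂ (j g) (j f) : ℂ))
    (hR2 : ∀ f g : D, (S f) (R g) = (inner ℂ (j g) (j f) : ℂ))
    (θ : X → (D →SL[starRingEnd ℂ] ℂ))
    (hθ : ∀ (x : X) (g : D), (θ x) g = (ω x) (R g)) :
    (∀ f g : D, (inner ℂ (j g) (j f) : ℂ) = ∫ x, conj ((θ x) f) * (ω x) g ∂μ) ∧
    (∀ f : D, MemLp (fun x => (θ x) f) 2 μ) ∧
    (∀ f g : D, ∫ x, conj ((θ x) f) * (θ x) g ∂μ = (inner ℂ (j g) (j (R f)) : ℂ)) ∧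
    (∀ f : D, B⁻¹ * ‖j f‖ ^ 2 ≤ ∫ x, ‖(θ x) f‖ ^ 2 ∂μ ∧
      ∫ x, ‖(θ x) f‖ ^ 2 ∂μ ≤ A⁻¹ * ‖j f‖ ^ 2) := by
  have hB : (0:ℝ) < B := lt_of_lt_of_le hA hAB
  refine ⟨?_, ?_, ?_, ?_⟩
  · intro f g
    have h : (fun x => conj ((θ x) f) * (ω x) g) = fun x => conj ((ω x) (R f)) * (ω x) g := by
      funext x; rw [hθ]
    rw [h, ← hS, hR1]
  · intro f
    have h : (fun x => (θ x) f) = fun x => (ω x) (R f) := by funext x; exact hθ x f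
    rw [h]; exact hL2 (R f)
  · intro f g
    have h : (fun x => conj ((θ x) f) * (θ x) g) = fun x => conj ((ω x) (R f)) * (ω x) (R g) := by
      funext x; rw [hθ, hθ]
    rw [h, ← hS, hR2]
  · intro f
    have hcast : ∀ g : X → ℝ, ∫ x, ((g x : ℝ) : ℂ) ∂μ = ((∫ x, g x ∂μ : ℝ) : ℂ) :=
      fun g => integral_ofReal
    set t : ℝ := ∫ x, ‖(θ x) f‖ ^ 2 ∂μ with ht_def
    have hteq : t = ∫ x, ‖(ω x) (R f)‖ ^ 2 ∂μ := by
      apply integral_congr_ae; filter_upwards with x; rw [hθ]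
    have hfr := hframe (R f)
    have ht_lo : A * ‖j (R f)‖ ^ 2 ≤ t := by rw [hteq]; exact hfr.1
    have ht_hi : t ≤ B * ‖j (R f)‖ ^ 2 := by rw [hteq]; exact hfr.2
    have ht_nonneg : 0 ≤ t := by
      rw [ht_def]; exact integral_nonneg fun x => sq_nonneg _
    clear_value t
    -- t = re ⟨j(Rf), jf⟩
    have ht_inner : ((t : ℝ) : ℂ) = (inner ℂ (j (R f)) (j f) : ℂ) := by
      rw [hteq, ← hcast, ← hR1 f (R f), hS]
      apply integral_congr_ae; filter_upwards with x
      rw [Complex.conj_mul']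
      norm_cast
    have ht_cs : t ≤ ‖j (R f)‖ * ‖j f‖ := by
      have h := re_inner_le_norm (𝕜 := ℂ) (j (R f)) (j f)
      rw [← ht_inner] at h; simpa using h
    -- L² Cauchy–Schwarz: ‖jf‖² ≤ ‖U‖ ‖V‖ with ‖U‖² = t, ‖V‖² ≤ B‖jf‖²
    set U := (hL2 (R f)).toLp _ with hU_def
    set V := (hL2 f).toLp _ with hV_def
    have hUV : (inner ℂ U V : ℂ) = ∫ x, conj ((ω x) (R f)) * (ω x) f ∂μ := by
      rw [L2.inner_def]
      apply integral_congr_ae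
      filter_upwards [(hL2 (R f)).coeFn_toLp, (hL2 f).coeFn_toLp] with x h1 h2
      rw [RCLike.inner_apply, h1, h2, mul_comm]
    have hUV2 : (inner ℂ U V : ℂ) = ((‖j f‖ ^ 2 : ℝ) : ℂ) := by
      rw [hUV, ← hS, hR1, inner_self_eq_norm_sq_to_K]
      norm_cast
    have hUU : (inner ℂ U U : ℂ) = ((t : ℝ) : ℂ) := by
      rw [L2.inner_def, hteq, ← hcast]
      apply integral_congr_ae
      filter_upwards [(hL2 (R f)).coeFn_toLp] with x h1
      rw [RCLike.inner_apply, h1, mul_comm, Complex.conj_mul']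
      norm_cast
    have hVV : (inner ℂ V V : ℂ) = ((∫ x, ‖(ω x) f‖ ^ 2 ∂μ : ℝ) : ℂ) := by
      rw [L2.inner_def, ← hcast]
      apply integral_congr_ae
      filter_upwards [(hL2 f).coeFn_toLp] with x h1
      rw [RCLike.inner_apply, h1, mul_comm, Complex.conj_mul']
      norm_cast
    have hnU : ‖U‖ ^ 2 = t := by
      rw [norm_sq_eq_re_inner (𝕜 := ℂ), hUU]; simp
    have hnV : ‖V‖ ^ 2 ≤ B * ‖j f‖ ^ 2 := by
      rw [norm_sq_eq_re_inner (𝕜 := ℂ), hVV]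
      simpa using (hframe f).2
    have hcs2 : ‖j f‖ ^ 2 ≤ ‖U‖ * ‖V‖ := by
      have h := norm_inner_le_norm (𝕜 := ℂ) U V
      rw [hUV2] at h
      rw [Complex.norm_real, Real.norm_eq_abs, abs_of_nonneg (sq_nonneg _)] at h
      exact h
    have e : ‖U‖ * ‖V‖ * (‖U‖ * ‖V‖) = t * ‖V‖ ^ 2 := by rw [← hnU]; ring
    have h4 : ‖j f‖ ^ 2 * ‖j f‖ ^ 2 ≤ t * ‖V‖ ^ 2 := by
      rw [← e]
      exact mul_le_mul hcs2 hcs2 (sq_nonneg _) (mul_nonneg (norm_nonneg _) (norm_nonneg _))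
    have h5 : ‖j f‖ ^ 2 * ‖j f‖ ^ 2 ≤ t * (B * ‖j f‖ ^ 2) :=
      h4.trans (mul_le_mul_of_nonneg_left hnV ht_nonneg)
    refine ⟨aux_lower hB ht_nonneg h5 (norm_nonneg _),
      aux_upper hA hB ht_nonneg ht_lo ht_cs ht_hi (norm_nonneg _) (norm_nonneg _)⟩
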